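/- There is an absolute constant c > 0 such that for every odd prime p, the kernel K : F_p × F_p → ℂ defined by K(x, y) = e_p(−x² · (4y)^{−1}) for y ≠ 0 and K(x, 0) = 0 satisfies Ω ≤ c·p², where Ω = ( Σ_{s,u,v ∈ F_p} | Σ_{x ∈ F_p} K(x, s − x) · conj(K(x + u, s − x)) · conj(K(x, s + v − x)) · K(x + u, s + v − x) |² )^(1/2). -/

import Mathlib

open Finset

/-- `e_p(x) = exp(2πi x / p)` for `x : ZMod p`. -/
noncomputable def ep (p : ℕ) [NeZero p] (x : ZMod p) : ℂ :=
  Complex.exp (2 * (Real.pi : ℂ) * Complex.I * (x.val : ℂ) / (p : ℂ))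

/-- The quadratic kernel `K(x,y) = e_p(-x²(4y)⁻¹)` for `y ≠ 0`, `0` otherwise. -/
noncomputable def Kq (p : ℕ) [NeZero p] (x y : ZMod p) : ℂ :=
  if y = 0 then 0 else ep p (-(x ^ 2 * (4 * y)⁻¹))

/-- The quantity Ω associated to a kernel K. -/
noncomputable def bigOmega (p : ℕ) [NeZero p] (K : ZMod p → ZMod p → ℂ) : ℝ :=
  (∑ s : ZMod p, ∑ u : ZMod p, ∑ v : ZMod p,
    ‖∑ x : ZMod p,
      K x (s - x) * star (K (x + u) (s - x)) * star (K x (s + v - x)) *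
        K (x + u) (s + v - x)‖ ^ 2) ^ ((1 : ℝ) / 2)

section Aux

variable {p : ℕ} [NeZero p]

lemma ep_eq (x : ZMod p) : ep p x = ZMod.stdAddChar x := by
  rw [ZMod.stdAddChar_apply, ZMod.toCircle_apply]; rfl

lemma ep_zero : ep p 0 = 1 := by rw [ep_eq]; exact AddChar.map_zero_eq_one _

lemma ep_add (a b : ZMod p) : ep p (a + b) = ep p a * ep p b := by
  simp_rw [ep_eq]; exact AddChar.map_add_eq_mul _ a b

lemma abs_ep (a : ZMod p) : ‖ep p a‖ = 1 := by
  rw [ep_eq, ZMod.stdAddChar_apply]; exact Circle.norm_coe _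

lemma star_ep (a : ZMod p) : star (ep p a) = ep p (-a) := by
  have h := ep_add a (-a)
  rw [add_neg_cancel, ep_zero] at h
  rw [Complex.star_def, ← Complex.inv_eq_conj (abs_ep a),
    inv_eq_of_mul_eq_one_right h.symm]

lemma ep_ortho (a : ZMod p) : ∑ s : ZMod p, ep p (a * s) = if a = 0 then (p : ℂ) else 0 := by
  simp_rw [ep_eq, mul_comm a]
  rw [AddChar.sum_mulShift a (ZMod.isPrimitive_stdAddChar p), ZMod.card]
  split_ifs <;> simp

/-- Orthogonality bound: the mean square of a linear-phase sum is controlled by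
the number of coincident frequencies. -/
lemma key (c : ZMod p → ℂ) (α : ZMod p → ZMod p) (hc : ∀ t, ‖c t‖ ≤ 1) :
    ∑ s : ZMod p, ‖∑ t : ZMod p, c t * ep p (α t * s)‖ ^ 2
      ≤ ∑ t : ZMod p, ∑ t' : ZMod p, (if α t = α t' then (p : ℝ) else 0) := by
  set S : ZMod p → ℂ := fun s => ∑ t, c t * ep p (α t * s) with hS
  have e1 : ((∑ s, ‖S s‖ ^ 2 : ℝ) : ℂ) = ∑ s, S s * star (S s) := by
    push_cast
    refine Finset.sum_congr rfl fun s _ => ?_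
    rw [Complex.star_def, Complex.mul_conj, ← Complex.sq_norm]
    push_cast; ring
  have e2 : ∑ s, S s * star (S s)
      = ∑ t, ∑ t', (c t * star (c t')) * (if α t - α t' = 0 then (p:ℂ) else 0) := by
    have step : ∀ s, S s * star (S s)
        = ∑ t, ∑ t', (c t * star (c t')) * ep p ((α t - α t') * s) := by
      intro s
      have hstar : star (S s) = ∑ t', star (c t') * ep p (-(α t' * s)) := by
        rw [hS]
        rw [star_sum]
        refine Finset.sum_congr rfl fun t' _ => ?_
        rw [star_mul', star_ep]
      rw [hS, hstar, Finset.sum_mul_sum]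
      refine Finset.sum_congr rfl fun t _ => Finset.sum_congr rfl fun t' _ => ?_
      rw [show (α t - α t') * s = α t * s + -(α t' * s) by ring, ep_add]
      ring
    simp_rw [step]
    rw [Finset.sum_comm]
    refine Finset.sum_congr rfl fun t _ => ?_
    rw [Finset.sum_comm]
    refine Finset.sum_congr rfl fun t' _ => ?_
    rw [← Finset.mul_sum, ep_ortho]
  have e3 : ∑ s, ‖S s‖ ^ 2
      = ‖∑ t, ∑ t', (c t * star (c t')) * (if α t - α t' = 0 then (p:ℂ) else 0)‖ := by
    rw [← e2, ← e1, Complex.norm_real, Real.norm_of_nonneg]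
    positivity
  rw [e3]
  refine le_trans (norm_sum_le _ _) ?_
  refine Finset.sum_le_sum fun t _ => ?_
  refine le_trans (norm_sum_le _ _) ?_
  refine Finset.sum_le_sum fun t' _ => ?_
  rw [norm_mul, norm_mul]
  by_cases h : α t = α t'
  · rw [if_pos h, if_pos (sub_eq_zero.2 h), Complex.norm_natCast]
    calc ‖c t‖ * ‖star (c t')‖ * (p:ℝ)
        ≤ 1 * 1 * (p:ℝ) := by
          have h2 : ‖star (c t')‖ ≤ 1 := by
            rw [Complex.star_def, Complex.norm_conj]; exact hc t'
          have h3 := hc t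
          gcongr
      _ = (p:ℝ) := by ring
  · rw [if_neg h, if_neg (fun hh => h (sub_eq_zero.1 hh))]
    simp

/-- The inner `x`-sum, rewritten as a linear-phase sum in `s`. -/
lemma expand (hp : p.Prime) (h2 : (2:ZMod p) ≠ 0) (u v s : ZMod p) :
    (∑ x : ZMod p, Kq p x (s - x) * star (Kq p (x + u) (s - x)) * star (Kq p x (s + v - x)) *
        Kq p (x + u) (s + v - x))
      = ∑ t : ZMod p, (if t = 0 ∨ t + v = 0 then 0 else
          ep p ((u^2 - 2*t*u) * v * (4*t*(t+v))⁻¹)) * ep p ((u*v*(2*t*(t+v))⁻¹) * s) := by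
  haveI := Fact.mk hp
  have h4 : (4:ZMod p) ≠ 0 := by
    rw [show (4:ZMod p) = 2*2 by norm_num]; exact mul_ne_zero h2 h2
  refine (Equiv.sum_comp (Equiv.subLeft s) (fun x => Kq p x (s - x) * star (Kq p (x + u) (s - x))
      * star (Kq p x (s + v - x)) * Kq p (x + u) (s + v - x))).symm.trans ?_
  refine Finset.sum_congr rfl fun t _ => ?_
  simp only [Equiv.subLeft_apply]
  have e1 : s - (s - t) = t := by ring
  have e2 : s + v - (s - t) = t + v := by ring
  rw [e1, e2]
  by_cases ht : t = 0
  · simp [Kq, ht]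
  by_cases htv : t + v = 0
  · simp [Kq, htv]
  rw [if_neg (by tauto)]
  rw [Kq, Kq, Kq, Kq, if_neg ht, if_neg ht, if_neg htv, if_neg htv, star_ep, star_ep]
  simp only [← ep_add]
  congr 1
  rw [neg_neg, neg_neg]
  have h4t : (4*t:ZMod p) ≠ 0 := mul_ne_zero h4 ht
  have h4tv : (4*t*(t+v):ZMod p) ≠ 0 := mul_ne_zero h4t htv
  have hw1 : ((4:ZMod p)*t)⁻¹ = (t+v) * (4*t*(t+v))⁻¹ := by
    field_simp
  have hw2 : ((4:ZMod p)*(t+v))⁻¹ = t * (4*t*(t+v))⁻¹ := by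
    field_simp
  have hw3 : ((2:ZMod p)*t*(t+v))⁻¹ = 2 * (4*t*(t+v))⁻¹ := by
    have h2t : (2*t*(t+v):ZMod p) ≠ 0 := mul_ne_zero (mul_ne_zero h2 ht) htv
    field_simp
    ring
  rw [hw1, hw2, hw3]
  ring

/-- Each fiber of the frequency map has at most two elements when `u, v ≠ 0`. -/
lemma fiber (hp : p.Prime) (h2 : (2:ZMod p) ≠ 0) {u v : ZMod p} (hu : u ≠ 0) (hv : v ≠ 0)
    (t t' : ZMod p) (h : u*v*(2*t*(t+v))⁻¹ = u*v*(2*t'*(t'+v))⁻¹) :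
    t' = t ∨ t' = -t - v := by
  haveI := Fact.mk hp
  have huv : (u*v : ZMod p) ≠ 0 := mul_ne_zero hu hv
  by_cases ht : t = 0 ∨ t + v = 0
  · have h0 : (2*t*(t+v) : ZMod p) = 0 := by
      rcases ht with h'|h' <;> simp [h']
    have hα : (u*v*(2*t*(t+v))⁻¹ : ZMod p) = 0 := by rw [h0, inv_zero, mul_zero]
    have h0' : (2*t'*(t'+v) : ZMod p) = 0 := by
      by_contra hne
      exact (mul_ne_zero huv (inv_ne_zero hne)) (h ▸ hα)
    have ht' : t' = 0 ∨ t' + v = 0 := by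
      rcases mul_eq_zero.1 h0' with h'|h'
      · rcases mul_eq_zero.1 h' with h''|h''
        · exact absurd h'' h2
        · exact Or.inl h''
      · exact Or.inr h'
    rcases ht with h1|h1 <;> rcases ht' with h1'|h1'
    · exact Or.inl (by rw [h1, h1'])
    · exact Or.inr (by rw [h1]; linear_combination h1')
    · exact Or.inr (by linear_combination h1' + h1)
    · exact Or.inl (by linear_combination h1' - h1)
  · push_neg at ht
    obtain ⟨ht0, htv0⟩ := ht
    have hd : (2*t*(t+v) : ZMod p) ≠ 0 := mul_ne_zero (mul_ne_zero h2 ht0) htv0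
    have hα : (u*v*(2*t*(t+v))⁻¹ : ZMod p) ≠ 0 := mul_ne_zero huv (inv_ne_zero hd)
    have hd' : (2*t'*(t'+v) : ZMod p) ≠ 0 := by
      intro h0
      rw [h0, inv_zero, mul_zero] at h
      exact hα h
    have heq : (2*t*(t+v) : ZMod p) = 2*t'*(t'+v) := by
      have := mul_left_cancel₀ huv h
      exact inv_injective this
    have hz2 : (2:ZMod p) * ((t'-t)*(t'+t+v)) = 0 := by linear_combination -heq
    have hz : ((t'-t)*(t'+t+v) : ZMod p) = 0 := by
      rcases mul_eq_zero.1 hz2 with h'|h'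
      · exact absurd h' h2
      · exact h'
    rcases mul_eq_zero.1 hz with h'|h'
    · exact Or.inl (sub_eq_zero.1 h')
    · exact Or.inr (by linear_combination h')

end Aux

theorem stmt8 : ∃ c : ℝ, 0 < c ∧ ∀ (p : ℕ) [NeZero p], p.Prime → p ≠ 2 →
    bigOmega p (Kq p) ≤ c * (p : ℝ) ^ 2 := by
  refine ⟨2, by norm_num, ?_⟩
  intro p _ hp hp2
  haveI := Fact.mk hp
  have h2 : (2:ZMod p) ≠ 0 := by
    intro h
    rw [show (2:ZMod p) = ((2:ℕ):ZMod p) by norm_num,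
      ZMod.natCast_eq_zero_iff] at h
    exact hp2 ((Nat.prime_dvd_prime_iff_eq hp Nat.prime_two).1 h)
  have hp1 : (1:ℝ) ≤ (p:ℝ) := by exact_mod_cast hp.one_lt.le
  have hppos : (0:ℝ) ≤ (p:ℝ) := by linarith
  -- notation for the frequency and coefficient maps
  -- per-(u,v) bound
  have hB : ∀ u v : ZMod p,
      ∑ s : ZMod p, ‖∑ x : ZMod p,
        Kq p x (s - x) * star (Kq p (x + u) (s - x)) * star (Kq p x (s + v - x)) *
          Kq p (x + u) (s + v - x)‖ ^ 2
      ≤ ∑ t : ZMod p, ∑ t' : ZMod p,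
          (if u*v*(2*t*(t+v))⁻¹ = u*v*(2*t'*(t'+v))⁻¹ then (p:ℝ) else 0) := by
    intro u v
    have hc : ∀ t : ZMod p, ‖((if t = 0 ∨ t + v = 0 then 0 else
        ep p ((u^2 - 2*t*u) * v * (4*t*(t+v))⁻¹)) : ℂ)‖ ≤ 1 := by
      intro t
      split_ifs with h
      · simp
      · rw [abs_ep]
    have := key (fun t => if t = 0 ∨ t + v = 0 then 0 else
        ep p ((u^2 - 2*t*u) * v * (4*t*(t+v))⁻¹)) (fun t => u*v*(2*t*(t+v))⁻¹) hc
    calc ∑ s : ZMod p, ‖∑ x : ZMod p,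
        Kq p x (s - x) * star (Kq p (x + u) (s - x)) * star (Kq p x (s + v - x)) *
          Kq p (x + u) (s + v - x)‖ ^ 2
        = ∑ s : ZMod p, ‖∑ t : ZMod p, (if t = 0 ∨ t + v = 0 then 0 else
            ep p ((u^2 - 2*t*u) * v * (4*t*(t+v))⁻¹)) * ep p ((u*v*(2*t*(t+v))⁻¹) * s)‖ ^ 2 := by
          refine Finset.sum_congr rfl fun s _ => ?_
          rw [expand hp h2 u v s]
      _ ≤ _ := this
  -- counting bounds
  have hD1 : ∀ u v : ZMod p, ∑ t : ZMod p, ∑ t' : ZMod p,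
      (if u*v*(2*t*(t+v))⁻¹ = u*v*(2*t'*(t'+v))⁻¹ then (p:ℝ) else 0) ≤ (p:ℝ)^3 := by
    intro u v
    calc ∑ t : ZMod p, ∑ t' : ZMod p,
        (if u*v*(2*t*(t+v))⁻¹ = u*v*(2*t'*(t'+v))⁻¹ then (p:ℝ) else 0)
        ≤ ∑ _t : ZMod p, ∑ _t' : ZMod p, (p:ℝ) := by
          refine Finset.sum_le_sum fun t _ => Finset.sum_le_sum fun t' _ => ?_
          split_ifs
          · exact le_refl _
          · positivity
      _ = (p:ℝ)^3 := by
          simp [Finset.sum_const, Finset.card_univ, ZMod.card]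
          ring
  have hD2 : ∀ u v : ZMod p, u ≠ 0 → v ≠ 0 → ∑ t : ZMod p, ∑ t' : ZMod p,
      (if u*v*(2*t*(t+v))⁻¹ = u*v*(2*t'*(t'+v))⁻¹ then (p:ℝ) else 0) ≤ 2*(p:ℝ)^2 := by
    intro u v hu hv
    have hpt : ∀ t : ZMod p, ∑ t' : ZMod p,
        (if u*v*(2*t*(t+v))⁻¹ = u*v*(2*t'*(t'+v))⁻¹ then (p:ℝ) else 0) ≤ 2*(p:ℝ) := by
      intro t
      calc ∑ t' : ZMod p, (if u*v*(2*t*(t+v))⁻¹ = u*v*(2*t'*(t'+v))⁻¹ then (p:ℝ) else 0)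
          ≤ ∑ t' : ZMod p, ((if t' = t then (p:ℝ) else 0) + (if t' = -t-v then (p:ℝ) else 0)) := by
            refine Finset.sum_le_sum fun t' _ => ?_
            by_cases h : u*v*(2*t*(t+v))⁻¹ = u*v*(2*t'*(t'+v))⁻¹
            · rw [if_pos h]
              rcases fiber hp h2 hu hv t t' h with h'|h'
              · rw [if_pos h']
                have : (0:ℝ) ≤ (if t' = -t-v then (p:ℝ) else 0) := by positivity
                linarith
              · rw [if_pos h']
                have : (0:ℝ) ≤ (if t' = t then (p:ℝ) else 0) := by positivity
                linarith
            · rw [if_neg h]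
              positivity
        _ = 2*(p:ℝ) := by
            rw [Finset.sum_add_distrib, Finset.sum_ite_eq' univ t (fun _ => (p:ℝ)),
              Finset.sum_ite_eq' univ (-t-v) (fun _ => (p:ℝ))]
            simp; ring
    calc ∑ t : ZMod p, ∑ t' : ZMod p,
        (if u*v*(2*t*(t+v))⁻¹ = u*v*(2*t'*(t'+v))⁻¹ then (p:ℝ) else 0)
        ≤ ∑ _t : ZMod p, 2*(p:ℝ) := Finset.sum_le_sum fun t _ => hpt t
      _ = 2*(p:ℝ)^2 := by
          simp [Finset.sum_const, Finset.card_univ, ZMod.card]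
          ring
  -- assemble
  rw [bigOmega, ← Real.sqrt_eq_rpow]
  have hT : (∑ s : ZMod p, ∑ u : ZMod p, ∑ v : ZMod p,
      ‖∑ x : ZMod p,
        Kq p x (s - x) * star (Kq p (x + u) (s - x)) * star (Kq p x (s + v - x)) *
          Kq p (x + u) (s + v - x)‖ ^ 2) ≤ (2*(p:ℝ)^2)^2 := by
    have reorder : (∑ s : ZMod p, ∑ u : ZMod p, ∑ v : ZMod p,
        ‖∑ x : ZMod p,
          Kq p x (s - x) * star (Kq p (x + u) (s - x)) * star (Kq p x (s + v - x)) *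
            Kq p (x + u) (s + v - x)‖ ^ 2)
        = ∑ u : ZMod p, ∑ v : ZMod p, ∑ s : ZMod p,
          ‖∑ x : ZMod p,
            Kq p x (s - x) * star (Kq p (x + u) (s - x)) * star (Kq p x (s + v - x)) *
              Kq p (x + u) (s + v - x)‖ ^ 2 := by
      rw [Finset.sum_comm]
      exact Finset.sum_congr rfl fun u _ => Finset.sum_comm
    rw [reorder]
    have hg : ∀ u v : ZMod p, ∑ s : ZMod p, ‖∑ x : ZMod p,
        Kq p x (s - x) * star (Kq p (x + u) (s - x)) * star (Kq p x (s + v - x)) *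
          Kq p (x + u) (s + v - x)‖ ^ 2
        ≤ 2*(p:ℝ)^2 + (if u = 0 then (p:ℝ)^3 else 0) + (if v = 0 then (p:ℝ)^3 else 0) := by
      intro u v
      by_cases hu : u = 0
      · refine le_trans ((hB u v).trans (hD1 u v)) ?_
        rw [if_pos hu]
        have : (0:ℝ) ≤ (if v = 0 then (p:ℝ)^3 else 0) := by positivity
        nlinarith
      by_cases hv : v = 0
      · refine le_trans ((hB u v).trans (hD1 u v)) ?_
        rw [if_pos hv, if_neg hu]
        nlinarith
      · refine le_trans ((hB u v).trans (hD2 u v hu hv)) ?_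
        rw [if_neg hu, if_neg hv]
        linarith
    calc ∑ u : ZMod p, ∑ v : ZMod p, ∑ s : ZMod p,
        ‖∑ x : ZMod p,
          Kq p x (s - x) * star (Kq p (x + u) (s - x)) * star (Kq p x (s + v - x)) *
            Kq p (x + u) (s + v - x)‖ ^ 2
        ≤ ∑ u : ZMod p, ∑ v : ZMod p,
          (2*(p:ℝ)^2 + (if u = 0 then (p:ℝ)^3 else 0) + (if v = 0 then (p:ℝ)^3 else 0)) :=
          Finset.sum_le_sum fun u _ => Finset.sum_le_sum fun v _ => hg u v
      _ = (p:ℝ)^2 * (2*(p:ℝ)^2) + (p:ℝ) * (p:ℝ)^3 + (p:ℝ) * (p:ℝ)^3 := by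
          simp only [Finset.sum_add_distrib, Finset.sum_const, Finset.card_univ, ZMod.card,
            Finset.sum_ite_eq' univ (0:ZMod p), nsmul_eq_mul]
          simp [Finset.sum_const, Finset.card_univ, ZMod.card]
          ring
      _ ≤ (2*(p:ℝ)^2)^2 := by nlinarith
  calc Real.sqrt (∑ s : ZMod p, ∑ u : ZMod p, ∑ v : ZMod p,
      ‖∑ x : ZMod p,
        Kq p x (s - x) * star (Kq p (x + u) (s - x)) * star (Kq p x (s + v - x)) *
          Kq p (x + u) (s + v - x)‖ ^ 2)
      ≤ Real.sqrt ((2*(p:ℝ)^2)^2) := Real.sqrt_le_sqrt hT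
    _ = 2*(p:ℝ)^2 := Real.sqrt_sq (by positivity)
    _ = 2 * (p:ℝ)^2 := rfl
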